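/- Let ℓ ≥ 2, let b_1, …, b_ℓ ≥ 0 be integers, and let i = (i,j,k) ∈ V_ℓ(ξ) be such that either k < ℓ, or k = ℓ and i - jℓ ≥ ℓ. Then ξ(i)^+ = ξ(i^+), i.e. applying the operation ξ ↦ ξ^+ to the partition ξ(i) yields the partition attached to the vertex i^+. -/

import Mathlib

/-- `resI r s` is the remainder of `s` upon division by `r` if `r ∤ s`, and equals `r`
if `r ∣ s`. -/
def resI (r s : ℤ) : ℤ := if r ∣ s then r else s % r

/-- `sI i j k` is `s(i)`, defined by `i - jk = r(i) + s(i)(k-1)`. -/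
def sI (i j k : ℤ) : ℤ := (i - j * k - resI (k - 1) (i - j * k)) / (k - 1)

/-- The vertex set `V_ℓ(ξ)` for `ξ = 1^{b_1}2^{b_2}⋯ℓ^{b_ℓ}`. -/
def Vset (ℓ : ℤ) (b : ℤ → ℤ) : Set (ℤ × ℤ × ℤ) :=
  {v | 0 ≤ v.1 ∧ 0 ≤ v.2.1 ∧ 2 ≤ v.2.2 ∧ v.2.2 ≤ ℓ ∧
    v.1 ≤ ∑ m ∈ Finset.Icc 1 (v.2.2 - 1), m * b m ∧
    v.1 - v.2.1 * v.2.2 ≥ v.2.2 * (1 - if v.2.2 = ℓ then 1 else 0)}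

/-- The partition (multiset of parts) `ξ(i)` attached to a vertex `(i,j,k)`:
if `i - jk > 0` (equivalently `≠ 0` on `V_ℓ(ξ)`), it has one part `r(i)`, `s(i)` parts
`k-1`, `j + b_k` parts `k`, and `b_m` parts `m` for `k < m ≤ ℓ`; if `i = jk` (which on
`V_ℓ(ξ)` forces `k = ℓ`), it has `b_ℓ + j` parts all equal to `ℓ`. -/
noncomputable def xiOf (ℓ : ℤ) (b : ℤ → ℤ) (i j k : ℤ) : Multiset ℤ :=
  if i - j * k = 0 then Multiset.replicate (b ℓ + j).toNat ℓ
  else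
    {resI (k - 1) (i - j * k)} + Multiset.replicate (sI i j k).toNat (k - 1)
      + Multiset.replicate (j + b k).toNat k
      + ∑ m ∈ Finset.Icc (k + 1) ℓ, Multiset.replicate (b m).toNat m

/-- The operation `ξ ↦ ξ⁺` on partitions: if `ξ = (ξ_1 ≥ ⋯ ≥ ξ_s > 0)` with `s ≥ 2`
parts, `ξ⁺` is obtained from `(ξ_1, …, ξ_{s-2}, ξ_{s-1}+1, ξ_s - 1)` by discarding a zero
entry; if `s ≤ 1` then `ξ⁺ = ξ`.  (Sorting ascendingly, `x` is the smallest part `ξ_s`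
and `y` the second smallest part `ξ_{s-1}`.) -/
def plusOp (ξ : Multiset ℤ) : Multiset ℤ :=
  match ξ.sort (· ≤ ·) with
  | x :: y :: rest => (↑rest : Multiset ℤ) + {y + 1} + (if 0 < x - 1 then {x - 1} else 0)
  | _ => ξ


lemma resI_of (c d r s : ℤ) (h1 : 1 ≤ r) (h2 : r ≤ c) (h3 : 0 ≤ s)
    (hd : d = r + s * c) : resI c d = r := by
  have hc : 1 ≤ c := le_trans h1 h2
  unfold resI
  rcases eq_or_lt_of_le h2 with rfl | hrc
  · have : r ∣ d := ⟨1 + s, by rw [hd]; ring⟩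
    simp [this]
  · have hnd : ¬ c ∣ d := by
      intro hdvd
      have : c ∣ r := by
        have h1' : c ∣ s * c := ⟨s, mul_comm s c⟩
        have := hdvd.sub h1'
        simpa [hd] using this
      have := Int.le_of_dvd (by omega) this
      omega
    rw [if_neg hnd, hd, Int.add_mul_emod_self_right]
    exact Int.emod_eq_of_lt (by omega) hrc

lemma sI_of (i j k r s : ℤ) (h1 : 1 ≤ r) (h2 : r ≤ k - 1) (h3 : 0 ≤ s)
    (hd : i - j * k = r + s * (k - 1)) : sI i j k = s := by
  unfold sI
  rw [resI_of (k-1) _ r s h1 h2 h3 hd, hd]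
  have h4 : r + s * (k - 1) - r = s * (k-1) := by ring
  rw [h4, Int.mul_ediv_cancel _ (by omega)]

lemma resI_sI_spec (i j k : ℤ) (hk : 2 ≤ k) (hd : 0 < i - j * k) :
    1 ≤ resI (k-1) (i - j*k) ∧ resI (k-1) (i - j*k) ≤ k - 1 ∧ 0 ≤ sI i j k ∧
      i - j*k = resI (k-1) (i - j*k) + sI i j k * (k-1) := by
  unfold sI resI
  by_cases hdvd : (k-1) ∣ (i - j*k)
  · rw [if_pos hdvd]
    have hdc : k - 1 ≤ i - j*k := Int.le_of_dvd hd hdvd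
    have h2 : (k-1) ∣ (i - j*k - (k-1)) := hdvd.sub dvd_rfl
    refine ⟨by omega, le_refl _, Int.ediv_nonneg (by omega) (by omega), ?_⟩
    rw [Int.ediv_mul_cancel h2]; ring
  · rw [if_neg hdvd]
    have h0 : 0 ≤ (i - j*k) % (k-1) := Int.emod_nonneg _ (by omega)
    have hlt : (i - j*k) % (k-1) < k - 1 := Int.emod_lt_of_pos _ (by omega)
    have hne : (i - j*k) % (k-1) ≠ 0 := fun hh => hdvd (Int.dvd_of_emod_eq_zero hh)
    have hsub : i - j*k - (i - j*k) % (k-1) = (k-1) * ((i - j*k) / (k-1)) := by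
      rw [Int.emod_def]; ring
    have hdiv : 0 ≤ (i - j*k) / (k-1) := Int.ediv_nonneg (by omega) (by omega)
    refine ⟨by omega, by omega, ?_, ?_⟩
    · rw [hsub, Int.mul_ediv_cancel_left _ (by omega)]; exact hdiv
    · rw [hsub, Int.mul_ediv_cancel_left _ (by omega)]
      have := Int.emod_add_mul_ediv (i - j*k) (k-1)
      linarith

lemma plusOp_eq (x y : ℤ) (t : Multiset ℤ) (hxy : x ≤ y) (ht : ∀ z ∈ t, y ≤ z) :
    plusOp ({x} + ({y} + t)) = t + {y + 1} + (if 0 < x - 1 then {x - 1} else 0) := by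
  have hperm : List.Perm (({x} + ({y} + t)).sort (· ≤ ·)) (x :: y :: t.sort (· ≤ ·)) := by
    rw [← Multiset.coe_eq_coe]
    have h2 : ((x :: y :: Multiset.sort t (· ≤ ·) : List ℤ) : Multiset ℤ) = {x} + ({y} + t) := by
      simp [← Multiset.cons_coe, Multiset.sort_eq, Multiset.singleton_add, Multiset.cons_swap]
    rw [Multiset.sort_eq, h2]
  have hsorted : (x :: y :: t.sort (· ≤ ·)).Pairwise (· ≤ ·) := by
    rw [List.pairwise_cons, List.pairwise_cons]
    refine ⟨?_, ?_, Multiset.pairwise_sort _ _⟩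
    · intro z hz
      rcases List.mem_cons.mp hz with rfl | hz
      · exact hxy
      · exact le_trans hxy (ht z (by rwa [← Multiset.mem_sort (· ≤ ·)]))
    · intro z hz
      exact ht z (by rwa [← Multiset.mem_sort (· ≤ ·)])
  have hsort : ({x} + ({y} + t)).sort (· ≤ ·) = x :: y :: t.sort (· ≤ ·) :=
    List.Perm.eq_of_pairwise' (Multiset.pairwise_sort _ _) hsorted hperm
  unfold plusOp
  rw [hsort]
  simp [Multiset.sort_eq]

lemma repl_split (n : ℤ) (hn : 1 ≤ n) (a : ℤ) :
    Multiset.replicate n.toNat a = {a} + Multiset.replicate (n-1).toNat a := by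
  have h : n.toNat = (n-1).toNat + 1 := by omega
  rw [h, Multiset.replicate_succ, Multiset.singleton_add]

lemma mem_big (b : ℤ → ℤ) (a L z : ℤ)
    (hz : z ∈ ∑ m ∈ Finset.Icc a L, Multiset.replicate (b m).toNat m) : a ≤ z := by
  rw [Multiset.mem_sum] at hz
  obtain ⟨m, hm, hzm⟩ := hz
  rw [Multiset.eq_of_mem_replicate hzm]
  exact (Finset.mem_Icc.mp hm).1

lemma sum_Icc_split {M : Type*} [AddCommMonoid M] (f : ℤ → M) (a c B : ℤ)
    (h1 : a ≤ B) (h2 : B ≤ c + 1) :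
    ∑ m ∈ Finset.Icc a c, f m
      = (∑ m ∈ Finset.Icc a (B-1), f m) + ∑ m ∈ Finset.Icc B c, f m := by
  rw [← Finset.sum_union]
  · congr 1
    ext x
    simp only [Finset.mem_Icc, Finset.mem_union]
    omega
  · rw [Finset.disjoint_left]
    intro x hx hx2
    simp only [Finset.mem_Icc] at hx hx2
    omega

lemma sum_Icc_bot {M : Type*} [AddCommMonoid M] (f : ℤ → M) (a c : ℤ) (h : a ≤ c) :
    ∑ m ∈ Finset.Icc a c, f m = f a + ∑ m ∈ Finset.Icc (a+1) c, f m := by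
  rw [sum_Icc_split f a c (a+1) (by omega) (by omega)]
  have h2 : a + 1 - 1 = a := by ring
  rw [h2, Finset.Icc_self, Finset.sum_singleton]

/-- Let `ℓ ≥ 2`, `b_1, …, b_ℓ ≥ 0`, and `(i,j,k) ∈ V_ℓ(ξ)` with either
`k < ℓ`, or `k = ℓ` and `i - jℓ ≥ ℓ`.  If `(i',j',k')` is the vertex `i⁺`, i.e. either
`i - jk ≥ k(2 - δ_{k,ℓ})` and `(i',j',k') = (i, j+1, k)`, or `i - jk < k(2 - δ_{k,ℓ})`
and `(i',j',k') = (i + m·b_m, 0, m+1)` for the minimal `k ≤ m < ℓ` with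
`(i + m·b_m, 0, m+1) ∈ V_ℓ(ξ)`, then `ξ(i)⁺ = ξ(i⁺)`. -/
theorem stmt6 (ℓ : ℤ) (hℓ : 2 ≤ ℓ) (b : ℤ → ℤ) (hb : ∀ m, 0 ≤ b m)
    (i j k : ℤ) (hv : (i, j, k) ∈ Vset ℓ b)
    (h : k < ℓ ∨ (k = ℓ ∧ ℓ ≤ i - j * ℓ))
    (i' j' k' : ℤ)
    (hplus :
      (i - j * k ≥ k * (2 - if k = ℓ then 1 else 0) ∧ (i', j', k') = (i, j + 1, k)) ∨
      (¬ (i - j * k ≥ k * (2 - if k = ℓ then 1 else 0)) ∧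
        ∃ m : ℤ, k ≤ m ∧ m < ℓ ∧ (i', j', k') = (i + m * b m, 0, m + 1) ∧
          (i + m * b m, 0, m + 1) ∈ Vset ℓ b ∧
          ∀ m' : ℤ, k ≤ m' → m' < ℓ → (i + m' * b m', 0, m' + 1) ∈ Vset ℓ b → m ≤ m')) :
    plusOp (xiOf ℓ b i j k) = xiOf ℓ b i' j' k' := by
  obtain ⟨hi0, hj0, hk2, hkl, hile, hdge⟩ := hv
  simp only at hi0 hj0 hk2 hkl hile hdge
  have hdk : k ≤ i - j * k := by
    rcases h with hlt | ⟨hkeq, hge⟩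
    · have he : (if k = ℓ then (1:ℤ) else 0) = 0 := if_neg (by omega)
      rw [he] at hdge
      linarith
    · subst hkeq; linarith
  have hd_pos : 0 < i - j * k := by linarith
  obtain ⟨hr1, hrk, hs0, hdrs⟩ := resI_sI_spec i j k hk2 hd_pos
  have hs1 : 1 ≤ sI i j k := by
    have h1 : 1 ≤ sI i j k * (k-1) := by linarith
    by_contra hc
    push_neg at hc
    have : sI i j k * (k-1) ≤ 0 := mul_nonpos_iff.mpr (Or.inr ⟨by omega, by omega⟩)
    linarith
  have hLHS : plusOp (xiOf ℓ b i j k) =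
      Multiset.replicate (sI i j k - 1).toNat (k-1) + Multiset.replicate (j + b k).toNat k
        + (∑ m ∈ Finset.Icc (k+1) ℓ, Multiset.replicate (b m).toNat m) + {k}
        + (if 0 < resI (k-1) (i - j*k) - 1 then ({resI (k-1) (i - j*k) - 1} : Multiset ℤ)
            else 0) := by
    simp only [xiOf]
    rw [if_neg (by omega)]
    rw [repl_split (sI i j k) hs1 (k-1)]
    have hre : ({resI (k - 1) (i - j * k)} : Multiset ℤ)
          + ({k-1} + Multiset.replicate (sI i j k - 1).toNat (k-1))
          + Multiset.replicate (j + b k).toNat k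
          + ∑ m ∈ Finset.Icc (k + 1) ℓ, Multiset.replicate (b m).toNat m
        = {resI (k - 1) (i - j * k)}
          + ({k-1} + (Multiset.replicate (sI i j k - 1).toNat (k-1)
              + Multiset.replicate (j + b k).toNat k
              + ∑ m ∈ Finset.Icc (k + 1) ℓ, Multiset.replicate (b m).toNat m)) := by
      abel
    have htail : ∀ z ∈ (Multiset.replicate (sI i j k - 1).toNat (k-1)
        + Multiset.replicate (j + b k).toNat k
        + ∑ m ∈ Finset.Icc (k + 1) ℓ, Multiset.replicate (b m).toNat m), k - 1 ≤ z := by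
      intro z hz
      rcases Multiset.mem_add.mp hz with hz | hz
      · rcases Multiset.mem_add.mp hz with hz | hz
        · rw [Multiset.eq_of_mem_replicate hz]
        · rw [Multiset.eq_of_mem_replicate hz]; omega
      · have := mem_big b (k+1) ℓ z hz; omega
    rw [hre, plusOp_eq (resI (k-1) (i - j*k)) (k-1) _ hrk htail]
    rw [show (k:ℤ) - 1 + 1 = k by ring]
  rcases hplus with ⟨hge, heq⟩ | ⟨hlt, m, hkm, hml, heq, hmem, hmin⟩
  · -- Case A
    have hI : i' = i ∧ j' = j + 1 ∧ k' = k := by simpa [Prod.ext_iff] using heq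
    rw [hI.1, hI.2.1, hI.2.2, hLHS]
    by_cases hz : i - (j+1)*k = 0
    · have hkeq : k = ℓ := by
        by_contra hne
        have he : (if k = ℓ then (1:ℤ) else 0) = 0 := if_neg hne
        rw [he] at hge
        nlinarith [hz]
      have hdi : i - j*k = k := by linear_combination hz
      have hs2 : sI i j k ≤ 1 := by
        by_contra hc
        push_neg at hc
        have h3 : 2*(k-1) ≤ sI i j k * (k-1) := mul_le_mul_of_nonneg_right (by omega) (by omega)
        linarith
      have hseq : sI i j k = 1 := le_antisymm hs2 hs1
      have hreq : resI (k-1) (i - j*k) = 1 := by rw [hseq] at hdrs; linarith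
      rw [hreq, hseq]
      simp only [xiOf]
      rw [if_pos hz, if_neg (by norm_num)]
      rw [show ((1:ℤ) - 1).toNat = 0 by norm_num, Multiset.replicate_zero]
      rw [Finset.Icc_eq_empty (by omega : ¬ k + 1 ≤ ℓ), Finset.sum_empty]
      rw [repl_split (b ℓ + (j+1)) (by have := hb ℓ; omega) ℓ]
      rw [show b ℓ + (j+1) - 1 = j + b ℓ by ring, ← hkeq]
      abel
    · have hz0 : 0 ≤ i - (j+1)*k := by
        rcases h with h1 | ⟨hkeq, hge2⟩
        · have he : (if k = ℓ then (1:ℤ) else 0) = 0 := if_neg (by omega)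
          rw [he] at hge
          nlinarith
        · nlinarith
      have hz' : 0 < i - (j+1)*k := lt_of_le_of_ne hz0 (Ne.symm hz)
      simp only [xiOf]
      rw [if_neg hz]
      rcases eq_or_lt_of_le hr1 with hr | hr
      · rw [← hr] at hdrs
        have hs2 : 2 ≤ sI i j k := by
          rcases (by omega : sI i j k = 1 ∨ 2 ≤ sI i j k) with h1 | h2
          · exfalso; rw [h1] at hdrs; nlinarith
          · exact h2
        have hre : resI (k-1) (i - (j+1)*k) = k - 1 :=
          resI_of (k-1) (i - (j+1)*k) (k-1) (sI i j k - 2) (by omega) (le_refl _) (by omega)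
            (by linear_combination hdrs)
        have hse : sI i (j+1) k = sI i j k - 2 :=
          sI_of i (j+1) k (k-1) (sI i j k - 2) (by omega) (le_refl _) (by omega)
            (by linear_combination hdrs)
        rw [hre, hse, ← hr, if_neg (by norm_num)]
        rw [repl_split (sI i j k - 1) (by omega) (k-1)]
        rw [show sI i j k - 1 - 1 = sI i j k - 2 by ring]
        rw [repl_split ((j+1) + b k) (by have := hb k; omega) k]
        rw [show (j+1) + b k - 1 = j + b k by ring]
        abel
      · have hre : resI (k-1) (i - (j+1)*k) = resI (k-1) (i - j*k) - 1 :=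
          resI_of (k-1) (i - (j+1)*k) (resI (k-1) (i - j*k) - 1) (sI i j k - 1)
            (by omega) (by omega) (by omega) (by linear_combination hdrs)
        have hse : sI i (j+1) k = sI i j k - 1 :=
          sI_of i (j+1) k (resI (k-1) (i - j*k) - 1) (sI i j k - 1)
            (by omega) (by omega) (by omega) (by linear_combination hdrs)
        rw [hre, hse, if_pos (show (0:ℤ) < resI (k-1) (i - j*k) - 1 by omega)]
        rw [repl_split ((j+1) + b k) (by have := hb k; omega) k]
        rw [show (j+1) + b k - 1 = j + b k by ring]
        abel
  · -- Case B
    have hI : i' = i + m * b m ∧ j' = 0 ∧ k' = m + 1 := by simpa [Prod.ext_iff] using heq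
    rw [hI.1, hI.2.1, hI.2.2]
    have hkl2 : k < ℓ := by
      rcases h with h1 | ⟨hkeq, hge⟩
      · exact h1
      · exfalso
        rw [if_pos hkeq] at hlt
        push_neg at hlt
        subst hkeq
        linarith
    have hlt2k : i - j*k < 2*k := by
      rw [if_neg (by omega)] at hlt
      push_neg at hlt
      linarith
    have hjknn : 0 ≤ j * k := mul_nonneg hj0 (by omega)
    have hik : k ≤ i := by linarith
    have hb0 : ∀ m', k ≤ m' → m' < m → b m' = 0 ∧ i ≤ m' := by
      intro m' h1 h2
      by_contra hcon
      have hmbnn : 0 ≤ m' * b m' := mul_nonneg (by omega) (hb m')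
      have hge' : m' + 1 ≤ i + m' * b m' := by
        rcases (not_and_or.mp hcon) with hb1 | hi1
        · have hb2 : 1 ≤ b m' := by have := hb m'; omega
          have : m' * 1 ≤ m' * b m' := mul_le_mul_of_nonneg_left hb2 (by omega)
          linarith
        · push_neg at hi1
          linarith
      have hmem' : (i + m' * b m', 0, m'+1) ∈ Vset ℓ b := by
        refine ⟨show (0:ℤ) ≤ i + m' * b m' by linarith,
          le_refl 0, show (2:ℤ) ≤ m' + 1 by omega, show m' + 1 ≤ ℓ by omega, ?_, ?_⟩
        · show i + m' * b m' ≤ ∑ x ∈ Finset.Icc 1 (m' + 1 - 1), x * b x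
          rw [show m' + 1 - 1 = m' by ring,
            sum_Icc_split (fun x => x * b x) 1 m' m' (by omega) (by omega),
            Finset.Icc_self, Finset.sum_singleton]
          have hmono : ∑ x ∈ Finset.Icc 1 (k-1), x * b x
              ≤ ∑ x ∈ Finset.Icc 1 (m'-1), x * b x := by
            apply Finset.sum_le_sum_of_subset_of_nonneg
            · exact Finset.Icc_subset_Icc_right (by omega)
            · intro x hx _
              simp only [Finset.mem_Icc] at hx
              exact mul_nonneg (by omega) (hb x)
          linarith
        · show i + m' * b m' - 0 * (m'+1) ≥ (m'+1) * (1 - if m' + 1 = ℓ then (1:ℤ) else 0)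
          rw [if_neg (by omega : ¬ m' + 1 = ℓ)]
          rw [show ((m':ℤ)+1) * (1 - 0) = m'+1 by ring, show (0:ℤ)*(m'+1) = 0 by ring]
          linarith
      exact absurd (hmin m' h1 (by omega) hmem') (by omega)
    rcases eq_or_lt_of_le hkm with heqkm | hkm'
    · -- m = k
      rw [← heqkm, hLHS]
      simp only [xiOf]
      have hbknn := hb k
      have hkbknn : 0 ≤ k * b k := mul_nonneg (by omega) hbknn
      have hd2ne : ¬ (i + k * b k - 0 * (k+1) = 0) := by
        intro hcc; rw [zero_mul, sub_zero] at hcc; linarith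
      rw [if_neg hd2ne]
      rcases eq_or_lt_of_le hdk with hdeq | hdlt
      · -- i - j*k = k
        have hs2 : sI i j k ≤ 1 := by
          by_contra hc; push_neg at hc
          have h3 : 2*(k-1) ≤ sI i j k * (k-1) :=
            mul_le_mul_of_nonneg_right (by omega) (by omega)
          linarith
        have hseq : sI i j k = 1 := le_antisymm hs2 hs1
        have hreq : resI (k-1) (i - j*k) = 1 := by rw [hseq] at hdrs; linarith
        have hre : resI (k+1-1) (i + k * b k - 0*(k+1)) = k :=
          resI_of (k+1-1) (i + k * b k - 0*(k+1)) k (j + b k) (by omega) (by omega) (by omega)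
            (by linear_combination -hdeq)
        have hse : sI (i + k * b k) 0 (k+1) = j + b k :=
          sI_of (i + k * b k) 0 (k+1) k (j + b k) (by omega) (by omega) (by omega)
            (by linear_combination -hdeq)
        rw [hreq, hseq, hre, hse, if_neg (by norm_num)]
        rw [sum_Icc_bot (fun x => Multiset.replicate (b x).toNat x) (k+1) ℓ (by omega)]
        rw [show (k:ℤ)+1-1 = k by ring, zero_add]
        rw [show ((1:ℤ)-1).toNat = 0 by norm_num, Multiset.replicate_zero]
        abel
      · -- k < i - j*k < 2k
        have hs2 : sI i j k ≤ 2 := by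
          by_contra hc; push_neg at hc
          have h3 : 3*(k-1) ≤ sI i j k * (k-1) :=
            mul_le_mul_of_nonneg_right (by omega) (by omega)
          linarith
        rcases (by omega : sI i j k = 1 ∨ sI i j k = 2) with hseq | hseq
        · rw [hseq] at hdrs
          have hr2 : 2 ≤ resI (k-1) (i - j*k) := by linarith
          have hre : resI (k+1-1) (i + k * b k - 0*(k+1)) = resI (k-1) (i - j*k) - 1 :=
            resI_of (k+1-1) (i + k * b k - 0*(k+1)) (resI (k-1) (i - j*k) - 1) (j + b k + 1)
              (by omega) (by omega) (by omega) (by linear_combination hdrs)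
          have hse : sI (i + k * b k) 0 (k+1) = j + b k + 1 :=
            sI_of (i + k * b k) 0 (k+1) (resI (k-1) (i - j*k) - 1) (j + b k + 1)
              (by omega) (by omega) (by omega) (by linear_combination hdrs)
          rw [hseq, hre, hse, if_pos (show (0:ℤ) < resI (k-1) (i - j*k) - 1 by omega)]
          rw [sum_Icc_bot (fun x => Multiset.replicate (b x).toNat x) (k+1) ℓ (by omega)]
          rw [show (k:ℤ)+1-1 = k by ring, zero_add]
          rw [repl_split (j + b k + 1) (by omega) k]
          rw [show j + b k + 1 - 1 = j + b k by ring]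
          rw [show ((1:ℤ)-1).toNat = 0 by norm_num, Multiset.replicate_zero]
          abel
        · rw [hseq] at hdrs
          have hreq : resI (k-1) (i - j*k) = 1 := le_antisymm (by linarith) hr1
          rw [hreq] at hdrs
          have hre : resI (k+1-1) (i + k * b k - 0*(k+1)) = k - 1 :=
            resI_of (k+1-1) (i + k * b k - 0*(k+1)) (k-1) (j + b k + 1)
              (by omega) (by omega) (by omega) (by linear_combination hdrs)
          have hse : sI (i + k * b k) 0 (k+1) = j + b k + 1 :=
            sI_of (i + k * b k) 0 (k+1) (k-1) (j + b k + 1)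
              (by omega) (by omega) (by omega) (by linear_combination hdrs)
          rw [hseq, hreq, hre, hse, if_neg (by norm_num)]
          rw [sum_Icc_bot (fun x => Multiset.replicate (b x).toNat x) (k+1) ℓ (by omega)]
          rw [show (k:ℤ)+1-1 = k by ring, zero_add]
          rw [repl_split (j + b k + 1) (by omega) k]
          rw [show j + b k + 1 - 1 = j + b k by ring]
          rw [show ((2:ℤ)-1).toNat = 1 by norm_num, Multiset.replicate_one]
          abel
    · -- k < m
      obtain ⟨hbk0, hik'⟩ := hb0 k (le_refl k) hkm'
      have hieq : i = k := le_antisymm hik' hik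
      have hjeq : j = 0 := by
        have h1 : j * k ≤ 0 := by linarith
        rcases mul_eq_zero.mp (le_antisymm h1 hjknn) with h2 | h2
        · exact h2
        · omega
      have hdeq : i - j*k = k := by rw [hieq, hjeq]; ring
      have hs2 : sI i j k ≤ 1 := by
        by_contra hc; push_neg at hc
        have h3 : 2*(k-1) ≤ sI i j k * (k-1) :=
          mul_le_mul_of_nonneg_right (by omega) (by omega)
        linarith
      have hseq : sI i j k = 1 := le_antisymm hs2 hs1
      have hreq : resI (k-1) (i - j*k) = 1 := by rw [hseq] at hdrs; linarith
      have hbmnn := hb m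
      have hmbmnn : 0 ≤ m * b m := mul_nonneg (by omega) hbmnn
      have hd2ne : ¬ (i + m * b m - 0 * (m+1) = 0) := by
        intro hcc; rw [zero_mul, sub_zero] at hcc; linarith
      have hre : resI (m+1-1) (i + m * b m - 0*(m+1)) = k :=
        resI_of (m+1-1) (i + m * b m - 0*(m+1)) k (b m) (by omega) (by omega) (by omega)
          (by linear_combination hieq)
      have hse : sI (i + m * b m) 0 (m+1) = b m :=
        sI_of (i + m * b m) 0 (m+1) k (b m) (by omega) (by omega) (by omega)
          (by linear_combination hieq)
      rw [hLHS, hreq, hseq]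
      simp only [xiOf]
      rw [if_neg hd2ne, hre, hse, if_neg (by norm_num)]
      rw [hjeq, hbk0]
      simp only [zero_add]
      have hzero : ∑ x ∈ Finset.Icc (k+1) (m-1), Multiset.replicate (b x).toNat x = 0 := by
        apply Finset.sum_eq_zero
        intro x hx
        simp only [Finset.mem_Icc] at hx
        rw [(hb0 x (by omega) (by omega)).1]
        simp
      rw [sum_Icc_split (fun x => Multiset.replicate (b x).toNat x) (k+1) ℓ m
        (by omega) (by omega), hzero]
      rw [sum_Icc_bot (fun x => Multiset.replicate (b x).toNat x) m ℓ (by omega)]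
      rw [sum_Icc_bot (fun x => Multiset.replicate (b x).toNat x) (m+1) ℓ (by omega)]
      rw [show (m:ℤ)+1-1 = m by ring, zero_add]
      rw [show ((1:ℤ)-1).toNat = 0 by norm_num, Multiset.replicate_zero]
      simp only [Int.toNat_zero, Multiset.replicate_zero]
      abel
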